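/- Let S be a uniformly random permutation of {1,...,n} with n ≥ 2, and define ν_{n,p}^{(l)}(S) as above with κ_{n,p} = Σ_{i=1}^n i^p. Then Var(ν_{n,p}^{(l)}(S)) = (n(n+1)/3)·(κ_{n,2p} − κ_{n,p}²/n) / (2κ_{n,p+1} − (n+1)κ_{n,p})². -/

import Mathlib

open Finset

/-- κ_{n,p} = Σ_{i=1}^n i^p, as a real number. -/
noncomputable def kappa (n p : ℕ) : ℝ := ∑ i ∈ Finset.Icc 1 n, (i : ℝ) ^ p

/-- The weighted rank statistic ν_{n,p}^{(l)} for a permutation of {1,...,n},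
represented as a permutation of `Fin n` acting on ranks i+1. -/
noncomputable def nuL (n p : ℕ) (σ : Equiv.Perm (Fin n)) : ℝ :=
  1 + 2 * (∑ i : Fin n, (((i : ℕ) : ℝ) + 1 - (((σ i : ℕ) : ℝ) + 1)) *
              ((n : ℝ) + 1 - ((i : ℕ) + 1)) ^ p) /
      (2 * kappa n (p + 1) - ((n : ℝ) + 1) * kappa n p)

section Aux

variable {n : ℕ}

lemma perm_sum_single_congr (g : Fin n → ℝ) (i j : Fin n) :
    ∑ σ : Equiv.Perm (Fin n), g (σ i) = ∑ σ : Equiv.Perm (Fin n), g (σ j) :=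
  Fintype.sum_bijective (· * Equiv.swap i j) (Group.mulRight_bijective _) _ _
    (fun σ => by simp [Equiv.Perm.mul_apply])

lemma perm_sum_single (hn : 1 ≤ n) (g : Fin n → ℝ) (i : Fin n) :
    ∑ σ : Equiv.Perm (Fin n), g (σ i) = ((n-1).factorial : ℝ) * ∑ k, g k := by
  have key : (n:ℝ) * ∑ σ : Equiv.Perm (Fin n), g (σ i)
      = (n.factorial : ℝ) * ∑ k, g k := by
    calc (n:ℝ) * ∑ σ : Equiv.Perm (Fin n), g (σ i)
        = ∑ j : Fin n, ∑ σ : Equiv.Perm (Fin n), g (σ j) := by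
          rw [Finset.sum_congr rfl (fun j _ => perm_sum_single_congr g j i), Finset.sum_const]
          simp [mul_comm]
      _ = ∑ σ : Equiv.Perm (Fin n), ∑ j, g (σ j) := Finset.sum_comm
      _ = ∑ σ : Equiv.Perm (Fin n), ∑ k, g k :=
          Finset.sum_congr rfl fun σ _ => Equiv.sum_comp σ g
      _ = (n.factorial : ℝ) * ∑ k, g k := by
          rw [Finset.sum_const]
          simp [Fintype.card_perm]
  have hfact : (n.factorial : ℝ) = n * ((n-1).factorial : ℝ) := by
    obtain ⟨m, rfl⟩ : ∃ m, n = m + 1 := ⟨n - 1, by omega⟩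
    rw [Nat.factorial_succ]
    push_cast [Nat.add_sub_cancel]
    ring
  have hn0 : (n:ℝ) ≠ 0 := by
    have : (0:ℝ) < n := by exact_mod_cast Nat.lt_of_lt_of_le Nat.zero_lt_one hn
    linarith
  apply mul_left_cancel₀ hn0
  rw [key, hfact]
  ring
variable {n : ℕ}

lemma perm_sum_pair_congr (h : Fin n → Fin n → ℝ) {i j i' j' : Fin n}
    (hij : i ≠ j) (hij' : i' ≠ j') :
    ∑ σ : Equiv.Perm (Fin n), h (σ i) (σ j)
      = ∑ σ : Equiv.Perm (Fin n), h (σ i') (σ j') := by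
  set f : Equiv.Perm (Fin n) := Equiv.swap i' i with hf
  have hji : f j' ≠ i := by
    intro hc
    apply hij'
    apply f.injective
    rw [hc]
    simp [hf]
  set π : Equiv.Perm (Fin n) := Equiv.swap (f j') j * f with hπ
  have hπi : π i' = i := by
    have h1 : f i' = i := by simp [hf]
    have h2 : Equiv.swap (f j') j i = i :=
      Equiv.swap_apply_of_ne_of_ne (Ne.symm hji) hij
    simp only [hπ, Equiv.Perm.mul_apply, h1, h2]
  have hπj : π j' = j := by
    simp only [hπ, Equiv.Perm.mul_apply, Equiv.swap_apply_left]
  exact Fintype.sum_bijective (· * π) (Group.mulRight_bijective π) _ _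
    (fun σ => by simp [Equiv.Perm.mul_apply, hπi, hπj])

lemma perm_sum_pair (hn : 2 ≤ n) (h : Fin n → Fin n → ℝ) {i j : Fin n} (hij : i ≠ j) :
    ∑ σ : Equiv.Perm (Fin n), h (σ i) (σ j)
      = ((n-2).factorial : ℝ) * ((∑ k, ∑ l, h k l) - ∑ k, h k k) := by
  have hn1 : 1 ≤ n := by omega
  set X := ∑ σ : Equiv.Perm (Fin n), h (σ i) (σ j) with hX
  have htot : ∑ a : Fin n, ∑ b : Fin n, ∑ σ : Equiv.Perm (Fin n), h (σ a) (σ b)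
      = (n.factorial : ℝ) * ∑ k, ∑ l, h k l := by
    calc ∑ a : Fin n, ∑ b : Fin n, ∑ σ : Equiv.Perm (Fin n), h (σ a) (σ b)
        = ∑ a : Fin n, ∑ σ : Equiv.Perm (Fin n), ∑ b : Fin n, h (σ a) (σ b) :=
          Finset.sum_congr rfl fun a _ => Finset.sum_comm
      _ = ∑ σ : Equiv.Perm (Fin n), ∑ a : Fin n, ∑ b : Fin n, h (σ a) (σ b) :=
          Finset.sum_comm
      _ = ∑ σ : Equiv.Perm (Fin n), ∑ k, ∑ l, h k l := by
          refine Finset.sum_congr rfl fun σ _ => ?_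
          calc ∑ a : Fin n, ∑ b : Fin n, h (σ a) (σ b)
              = ∑ a : Fin n, ∑ l, h (σ a) l :=
                Finset.sum_congr rfl fun a _ => Equiv.sum_comp σ (h (σ a))
            _ = ∑ k, ∑ l, h k l := Equiv.sum_comp σ (fun k => ∑ l, h k l)
      _ = (n.factorial : ℝ) * ∑ k, ∑ l, h k l := by
          rw [Finset.sum_const]
          simp [Fintype.card_perm]
  have per_a : ∀ a : Fin n, ∑ b : Fin n, ∑ σ : Equiv.Perm (Fin n), h (σ a) (σ b)
      = ((n-1).factorial : ℝ) * (∑ k, h k k) + ((n:ℝ) - 1) * X := by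
    intro a
    have hmem : a ∈ (Finset.univ : Finset (Fin n)) := Finset.mem_univ a
    rw [← Finset.add_sum_erase _ _ hmem]
    have hdiag : ∑ σ : Equiv.Perm (Fin n), h (σ a) (σ a)
        = ((n-1).factorial : ℝ) * (∑ k, h k k) :=
      perm_sum_single hn1 (fun k => h k k) a
    have hoff : ∑ b ∈ Finset.univ.erase a, ∑ σ : Equiv.Perm (Fin n), h (σ a) (σ b)
        = ((n:ℝ) - 1) * X := by
      rw [Finset.sum_congr rfl (fun b hb =>
        perm_sum_pair_congr h (Ne.symm (Finset.ne_of_mem_erase hb)) hij)]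
      rw [Finset.sum_const, Finset.card_erase_of_mem hmem, nsmul_eq_mul]
      congr 1
      simp only [Finset.card_univ, Fintype.card_fin]
      push_cast [Nat.cast_sub hn1]
      ring
    rw [hdiag, hoff]
  have hsum : (n:ℝ) * (((n-1).factorial : ℝ) * (∑ k, h k k) + ((n:ℝ) - 1) * X)
      = (n.factorial : ℝ) * ∑ k, ∑ l, h k l := by
    rw [← htot, Finset.sum_congr rfl (fun a _ => per_a a), Finset.sum_const]
    simp only [Finset.card_univ, Fintype.card_fin, nsmul_eq_mul]
  obtain ⟨m, rfl⟩ : ∃ m, n = m + 2 := ⟨n - 2, by omega⟩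
  have e1 : m + 2 - 1 = m + 1 := by omega
  have e2 : m + 2 - 2 = m := by omega
  have hf1 : ((m+2).factorial : ℝ) = ((m:ℝ)+2) * ((m:ℝ)+1) * (m.factorial : ℝ) := by
    rw [Nat.factorial_succ, Nat.factorial_succ]
    push_cast
    ring
  have hf2 : ((m+1).factorial : ℝ) = ((m:ℝ)+1) * (m.factorial : ℝ) := by
    rw [Nat.factorial_succ]
    push_cast
    ring
  rw [e1, hf2, hf1] at hsum
  have hkey : ((m:ℝ)+2) * ((m:ℝ)+1) * X
      = ((m:ℝ)+2) * ((m:ℝ)+1) * ((m.factorial : ℝ) * ((∑ k, ∑ l, h k l) - ∑ k, h k k)) := by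
    push_cast at hsum ⊢
    nlinarith [hsum]
  have hpos : ((m:ℝ)+2) * ((m:ℝ)+1) ≠ 0 := by positivity
  rw [e2]
  exact mul_left_cancel₀ hpos hkey

lemma perm_sum_lin (hn : 1 ≤ n) (w v : Fin n → ℝ) :
    ∑ σ : Equiv.Perm (Fin n), ∑ i, w i * v (σ i)
      = ((n-1).factorial : ℝ) * ((∑ i, w i) * (∑ k, v k)) := by
  rw [Finset.sum_comm]
  have h1 : ∀ i : Fin n, ∑ σ : Equiv.Perm (Fin n), w i * v (σ i)
      = w i * (((n-1).factorial : ℝ) * ∑ k, v k) := by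
    intro i
    rw [← Finset.mul_sum, perm_sum_single hn v i]
  rw [Finset.sum_congr rfl (fun i _ => h1 i), ← Finset.sum_mul]
  ring

lemma perm_sum_sq (hn : 2 ≤ n) (w v : Fin n → ℝ) :
    ∑ σ : Equiv.Perm (Fin n), (∑ i, w i * v (σ i))^2
      = ((n-1).factorial : ℝ) * (∑ i, w i ^ 2) * (∑ k, v k ^ 2)
        + ((n-2).factorial : ℝ) * ((∑ i, w i)^2 - ∑ i, w i ^ 2)
          * ((∑ k, v k)^2 - ∑ k, v k ^ 2) := by
  have hn1 : 1 ≤ n := by omega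
  set D1 : ℝ := ((n-1).factorial : ℝ) * ∑ k, v k ^ 2 with hD1
  set E2 : ℝ := ((n-2).factorial : ℝ) * ((∑ k, v k)^2 - ∑ k, v k ^ 2) with hE2
  have key : ∀ i j : Fin n, ∑ σ : Equiv.Perm (Fin n), v (σ i) * v (σ j)
      = if i = j then D1 else E2 := by
    intro i j
    by_cases hij : i = j
    · subst hij
      rw [if_pos rfl, hD1]
      have := perm_sum_single hn1 (fun k => v k * v k) i
      rw [this]
      congr 1
      exact Finset.sum_congr rfl fun k _ => (sq (v k) ▸ (pow_two (v k)).symm)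
    · rw [if_neg hij, hE2]
      rw [perm_sum_pair hn (fun k l => v k * v l) hij]
      congr 1
      rw [← Finset.sum_mul_sum, ← pow_two]
      congr 1
      exact Finset.sum_congr rfl fun k _ => (pow_two (v k)).symm
  have expand : ∀ σ : Equiv.Perm (Fin n), (∑ i, w i * v (σ i))^2
      = ∑ i, ∑ j, (w i * w j) * (v (σ i) * v (σ j)) := by
    intro σ
    rw [pow_two, Finset.sum_mul_sum]
    exact Finset.sum_congr rfl fun i _ => Finset.sum_congr rfl fun j _ => by ring
  calc ∑ σ : Equiv.Perm (Fin n), (∑ i, w i * v (σ i))^2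
      = ∑ σ : Equiv.Perm (Fin n), ∑ i, ∑ j, (w i * w j) * (v (σ i) * v (σ j)) :=
        Finset.sum_congr rfl fun σ _ => expand σ
    _ = ∑ i, ∑ σ : Equiv.Perm (Fin n), ∑ j, (w i * w j) * (v (σ i) * v (σ j)) :=
        Finset.sum_comm
    _ = ∑ i, ∑ j, ∑ σ : Equiv.Perm (Fin n), (w i * w j) * (v (σ i) * v (σ j)) :=
        Finset.sum_congr rfl fun i _ => Finset.sum_comm
    _ = ∑ i, ∑ j, (w i * w j) * (if i = j then D1 else E2) := by
        refine Finset.sum_congr rfl fun i _ => Finset.sum_congr rfl fun j _ => ?_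
        rw [← Finset.mul_sum, key i j]
    _ = ∑ i, ∑ j, ((w i * w j) * E2 + if i = j then (w i * w j) * (D1 - E2) else 0) := by
        refine Finset.sum_congr rfl fun i _ => Finset.sum_congr rfl fun j _ => ?_
        by_cases hij : i = j <;> simp [hij] <;> ring
    _ = ((∑ i, w i) * (∑ j, w j)) * E2 + (∑ i, w i ^ 2) * (D1 - E2) := by
        simp only [Finset.sum_add_distrib]
        congr 1
        · rw [Finset.sum_mul_sum]
          simp only [← Finset.sum_mul]
        · rw [Finset.sum_congr rfl (fun i (_ : i ∈ Finset.univ) => Finset.sum_ite_eq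
            Finset.univ i (fun j => (w i * w j) * (D1 - E2)))]
          simp only [Finset.mem_univ, if_true, ← Finset.sum_mul, pow_two]
    _ = ((n-1).factorial : ℝ) * (∑ i, w i ^ 2) * (∑ k, v k ^ 2)
        + ((n-2).factorial : ℝ) * ((∑ i, w i)^2 - ∑ i, w i ^ 2)
          * ((∑ k, v k)^2 - ∑ k, v k ^ 2) := by
        rw [hD1, hE2, ← pow_two]
        ring

lemma sumK1 (n : ℕ) : ∑ i : Fin n, (((i:ℕ):ℝ) + 1) = (n:ℝ)*((n:ℝ)+1)/2 := by
  induction n with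
  | zero => simp
  | succ m ih =>
    rw [Fin.sum_univ_castSucc]
    simp only [Fin.coe_castSucc, Fin.val_last]
    rw [ih]
    push_cast
    ring

lemma sumK2 (n : ℕ) : ∑ i : Fin n, (((i:ℕ):ℝ) + 1)^2 = (n:ℝ)*((n:ℝ)+1)*(2*(n:ℝ)+1)/6 := by
  induction n with
  | zero => simp
  | succ m ih =>
    rw [Fin.sum_univ_castSucc]
    simp only [Fin.coe_castSucc, Fin.val_last]
    rw [ih]
    push_cast
    ring

lemma sum_w (n p : ℕ) : ∑ i : Fin n, ((n:ℝ) - ((i:ℕ):ℝ))^p = kappa n p := by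
  rw [kappa]
  rw [Fin.sum_univ_eq_sum_range (fun i => ((n:ℝ) - ((i:ℕ):ℝ))^p)]
  rw [← Finset.Ico_add_one_right_eq_Icc, Finset.sum_Ico_eq_sum_range]
  have hr : n + 1 - 1 = n := by omega
  rw [hr]
  rw [← Finset.sum_range_reflect (fun j => (((1 + j:ℕ)):ℝ)^p) n]
  apply Finset.sum_congr rfl
  intro i hi
  have hi' : i < n := Finset.mem_range.mp hi
  have h1 : (1 + (n - 1 - i) : ℕ) = n - i := by omega
  rw [h1, Nat.cast_sub hi'.le]

end Aux

/-- Under a uniformly random permutation, the variance of ν_{n,p}^{(l)}. -/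
theorem stmt_17 (n p : ℕ) (hn : 2 ≤ n) (hp : 1 ≤ p) :
    (∑ σ : Equiv.Perm (Fin n), (nuL n p σ) ^ 2) / (Nat.factorial n : ℝ)
      - ((∑ σ : Equiv.Perm (Fin n), nuL n p σ) / (Nat.factorial n : ℝ)) ^ 2
      = ((n : ℝ) * ((n : ℝ) + 1) / 3) * (kappa n (2 * p) - (kappa n p) ^ 2 / n) /
          (2 * kappa n (p + 1) - ((n : ℝ) + 1) * kappa n p) ^ 2 := by
  have hn1 : 1 ≤ n := by omega
  set D : ℝ := 2 * kappa n (p + 1) - ((n : ℝ) + 1) * kappa n p with hD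
  set w : Fin n → ℝ := fun i => ((n:ℝ) - ((i:ℕ):ℝ))^p with hw
  set v : Fin n → ℝ := fun k => ((k:ℕ):ℝ) + 1 with hv
  set c : ℝ := ∑ i : Fin n, v i * w i with hc
  set U : Equiv.Perm (Fin n) → ℝ := fun σ => ∑ i, w i * v (σ i) with hU
  have hnu : ∀ σ : Equiv.Perm (Fin n), nuL n p σ = 1 + 2 * (c - U σ) * D⁻¹ := by
    intro σ
    rw [nuL]
    have hterm : (∑ i : Fin n, (((i : ℕ) : ℝ) + 1 - (((σ i : ℕ) : ℝ) + 1)) *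
        ((n : ℝ) + 1 - ((i : ℕ) + 1)) ^ p) = c - U σ := by
      rw [hc, hU, ← Finset.sum_sub_distrib]
      refine Finset.sum_congr rfl fun i _ => ?_
      simp only [hw, hv]
      have hb : (n:ℝ) + 1 - (((i:ℕ):ℝ) + 1) = (n:ℝ) - ((i:ℕ):ℝ) := by ring
      rw [hb]
      ring
    rw [hterm, ← hD, div_eq_mul_inv]
  have hW : ∑ i : Fin n, w i = kappa n p := by rw [hw]; exact sum_w n p
  have hW2 : ∑ i : Fin n, w i ^ 2 = kappa n (2*p) := by
    rw [hw, ← sum_w n (2*p)]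
    refine Finset.sum_congr rfl fun i _ => ?_
    rw [← pow_mul, mul_comm p 2]
  have hK1 : ∑ k : Fin n, v k = (n:ℝ)*((n:ℝ)+1)/2 := by rw [hv]; exact sumK1 n
  have hK2 : ∑ k : Fin n, v k ^ 2 = (n:ℝ)*((n:ℝ)+1)*(2*(n:ℝ)+1)/6 := by
    rw [hv]; exact sumK2 n
  have hS1 : ∑ σ : Equiv.Perm (Fin n), U σ
      = ((n-1).factorial : ℝ) * (kappa n p * ((n:ℝ)*((n:ℝ)+1)/2)) := by
    simp only [hU]
    rw [perm_sum_lin hn1 w v, hW, hK1]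
  have hS2 : ∑ σ : Equiv.Perm (Fin n), (U σ)^2
      = ((n-1).factorial : ℝ) * kappa n (2*p) * ((n:ℝ)*((n:ℝ)+1)*(2*(n:ℝ)+1)/6)
        + ((n-2).factorial : ℝ) * ((kappa n p)^2 - kappa n (2*p))
          * (((n:ℝ)*((n:ℝ)+1)/2)^2 - (n:ℝ)*((n:ℝ)+1)*(2*(n:ℝ)+1)/6) := by
    simp only [hU]
    rw [perm_sum_sq hn w v, hW, hW2, hK1, hK2]
  have hcard : (Finset.univ : Finset (Equiv.Perm (Fin n))).card = n.factorial := by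
    simp [Fintype.card_perm]
  have hsum1 : ∑ σ : Equiv.Perm (Fin n), nuL n p σ
      = (n.factorial : ℝ) * (1 + 2*c*D⁻¹)
        + (-(2*D⁻¹)) * (∑ σ : Equiv.Perm (Fin n), U σ) := by
    have lin : ∀ σ : Equiv.Perm (Fin n),
        nuL n p σ = (1 + 2*c*D⁻¹) + (-(2*D⁻¹)) * U σ := fun σ => by rw [hnu σ]; ring
    rw [Finset.sum_congr rfl fun σ _ => lin σ, Finset.sum_add_distrib, Finset.sum_const,
      ← Finset.mul_sum, hcard, nsmul_eq_mul]
  have hsum2 : ∑ σ : Equiv.Perm (Fin n), (nuL n p σ)^2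
      = (n.factorial : ℝ) * ((1 + 2*c*D⁻¹)^2)
        + (-(4*D⁻¹*(1+2*c*D⁻¹))) * (∑ σ : Equiv.Perm (Fin n), U σ)
        + (4*D⁻¹^2) * (∑ σ : Equiv.Perm (Fin n), (U σ)^2) := by
    have quad : ∀ σ : Equiv.Perm (Fin n),
        (nuL n p σ)^2 = (1 + 2*c*D⁻¹)^2 + (-(4*D⁻¹*(1+2*c*D⁻¹))) * U σ
          + (4*D⁻¹^2) * (U σ)^2 := fun σ => by rw [hnu σ]; ring
    rw [Finset.sum_congr rfl fun σ _ => quad σ, Finset.sum_add_distrib,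
      Finset.sum_add_distrib, Finset.sum_const, ← Finset.mul_sum, ← Finset.mul_sum,
      hcard, nsmul_eq_mul]
  rw [hsum1, hsum2, hS1, hS2]
  have hdiv : ∀ x : ℝ, x / D^2 = x * D⁻¹^2 := fun x => by rw [div_eq_mul_inv, inv_pow]
  rw [hdiv]
  generalize D⁻¹ = d
  obtain ⟨m, rfl⟩ : ∃ m, n = m + 2 := ⟨n - 2, by omega⟩
  have e1 : m + 2 - 1 = m + 1 := by omega
  have e2 : m + 2 - 2 = m := by omega
  rw [e1, e2]
  have hf2 : ((m+1).factorial : ℝ) = ((m:ℝ)+1) * (m.factorial : ℝ) := by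
    rw [Nat.factorial_succ]; push_cast; ring
  have hf1 : ((m+2).factorial : ℝ) = ((m:ℝ)+2) * ((m:ℝ)+1) * (m.factorial : ℝ) := by
    rw [Nat.factorial_succ, Nat.factorial_succ]; push_cast; ring
  rw [hf1, hf2]
  have hF : (m.factorial : ℝ) ≠ 0 := Nat.cast_ne_zero.mpr (Nat.factorial_ne_zero m)
  have h1 : ((m:ℝ)+1) ≠ 0 := by positivity
  have h2 : ((m:ℝ)+2) ≠ 0 := by positivity
  push_cast
  field_simp
  ring
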